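/- Let A, B, C, E ∈ ℝ³ be affinely independent. The map G : ℝ³ → ℝ³ given by G(x) = (dist(x, A), dist(x, B), dist(x, C)) is differentiable at E, and |det(DG(E))| = 6 · V_{ABCE} / (dist(E, A) · dist(E, B) · dist(E, C)), where DG(E) is the derivative of G at E viewed as a 3×3 matrix and V_{ABCE} is the volume of the tetrahedron with vertices A, B, C, E. -/

import Mathlib

/-- The (unsigned) volume of the tetrahedron with vertices `A B C E`:
`|det(B - A, C - A, E - A)| / 6`. -/
noncomputable def tetVol (A B C E : EuclideanSpace ℝ (Fin 3)) : ℝ :=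
  |(Matrix.of fun i j : Fin 3 => (![B - A, C - A, E - A] j) i).det| / 6

private lemma hasFDerivAt_dist_pt (P E : EuclideanSpace ℝ (Fin 3)) (h : E ≠ P) :
    HasFDerivAt (fun x => dist x P) ((dist E P)⁻¹ • (innerSL ℝ (E - P))) E := by
  have hne : ‖E - P‖ ≠ 0 := by simpa [sub_eq_zero] using h
  have h1 : HasFDerivAt (fun x : EuclideanSpace ℝ (Fin 3) => ‖x - P‖ ^ 2)
      (2 • ((innerSL ℝ (E - P)).comp (ContinuousLinearMap.id ℝ (EuclideanSpace ℝ (Fin 3))))) E := by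
    simpa using ((hasFDerivAt_id E).sub_const P).norm_sq
  have h2 := h1.sqrt (pow_ne_zero 2 hne)
  have hfun : (fun y : EuclideanSpace ℝ (Fin 3) => Real.sqrt (‖y - P‖ ^ 2)) =
      fun x => dist x P := by
    funext y; rw [Real.sqrt_sq (norm_nonneg _), dist_eq_norm]
  rw [hfun] at h2
  convert h2 using 1
  · rfl
  ext y
  rw [Real.sqrt_sq (norm_nonneg _)]
  simp only [ContinuousLinearMap.smul_apply, ContinuousLinearMap.coe_comp',
    Function.comp_apply, ContinuousLinearMap.coe_id', id_eq, smul_eq_mul, nsmul_eq_mul,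
    dist_eq_norm]
  field_simp
  ring

/-- For affinely independent `A, B, C, E` in `ℝ³`, the map
`G : x ↦ (dist x A, dist x B, dist x C)` is differentiable at `E` and the determinant of its
Jacobian matrix there satisfies
`|det DG(E)| = 6 · V_{ABCE} / (dist E A · dist E B · dist E C)`. -/
theorem jacobian_of_distances_to_three_points (A B C E : EuclideanSpace ℝ (Fin 3))
    (h : AffineIndependent ℝ ![A, B, C, E]) :
    DifferentiableAt ℝ
        (fun x : EuclideanSpace ℝ (Fin 3) => ![dist x A, dist x B, dist x C]) E ∧
      |(Matrix.of fun i j : Fin 3 =>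
          fderiv ℝ (fun x : EuclideanSpace ℝ (Fin 3) => ![dist x A, dist x B, dist x C]) E
            (EuclideanSpace.single j 1) i).det| =
        6 * tetVol A B C E / (dist E A * dist E B * dist E C) := by
  have hinj := h.injective
  have hEA : E ≠ A := by
    intro e
    have h30 : (![A, B, C, E] : Fin 4 → _) 3 = ![A, B, C, E] 0 := by simp [e]
    exact absurd (hinj h30) (by decide)
  have hEB : E ≠ B := by
    intro e
    have h31 : (![A, B, C, E] : Fin 4 → _) 3 = ![A, B, C, E] 1 := by simp [e]
    exact absurd (hinj h31) (by decide)
  have hEC : E ≠ C := by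
    intro e
    have h32 : (![A, B, C, E] : Fin 4 → _) 3 = ![A, B, C, E] 2 := by simp [e]
    exact absurd (hinj h32) (by decide)
  set LA := (dist E A)⁻¹ • (innerSL ℝ (E - A)) with hLA
  set LB := (dist E B)⁻¹ • (innerSL ℝ (E - B)) with hLB
  set LC := (dist E C)⁻¹ • (innerSL ℝ (E - C)) with hLC
  have hA := hasFDerivAt_dist_pt A E hEA
  have hB := hasFDerivAt_dist_pt B E hEB
  have hC := hasFDerivAt_dist_pt C E hEC
  have hPi : HasFDerivAt (fun x : EuclideanSpace ℝ (Fin 3) => ![dist x A, dist x B, dist x C])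
      (ContinuousLinearMap.pi ![LA, LB, LC]) E := by
    apply hasFDerivAt_pi''
    intro i
    fin_cases i
    · exact hA
    · exact hB
    · exact hC
  have hfd : fderiv ℝ (fun x : EuclideanSpace ℝ (Fin 3) => ![dist x A, dist x B, dist x C]) E
      = ContinuousLinearMap.pi ![LA, LB, LC] := hPi.fderiv
  refine ⟨hPi.differentiableAt, ?_⟩
  simp only [hfd]
  have hM : (Matrix.of fun i j : Fin 3 =>
      (ContinuousLinearMap.pi ![LA, LB, LC]) (EuclideanSpace.single j 1) i) =
      Matrix.diagonal ![(dist E A)⁻¹, (dist E B)⁻¹, (dist E C)⁻¹] *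
        Matrix.of (fun i j : Fin 3 => (![E - A, E - B, E - C] i) j) := by
    ext i j
    fin_cases i <;> fin_cases j <;>
      simp [Matrix.mul_apply, Fin.sum_univ_three, hLA, hLB, hLC, Matrix.diagonal,
        EuclideanSpace.inner_single_right, real_inner_comm]
  rw [hM, Matrix.det_mul, Matrix.det_diagonal, abs_mul]
  have hdetN : (Matrix.of (fun i j : Fin 3 => (![E - A, E - B, E - C] i) j)).det
      = (Matrix.of fun i j : Fin 3 => (![B - A, C - A, E - A] j) i).det := by
    simp [Matrix.det_fin_three, PiLp.sub_apply]
    ring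
  rw [hdetN]
  have hdA : (0:ℝ) < dist E A := dist_pos.2 hEA
  have hdB : (0:ℝ) < dist E B := dist_pos.2 hEB
  have hdC : (0:ℝ) < dist E C := dist_pos.2 hEC
  rw [tetVol]
  simp only [Fin.prod_univ_three, Matrix.cons_val_zero, Matrix.cons_val_one, Matrix.head_cons,
    Matrix.cons_val_two, Matrix.tail_cons]
  rw [abs_of_pos (by positivity)]
  field_simp
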